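/- Joint optimal stepsize–sampling problem (Lemma 6). Let n ≥ 1 and a_i, b_i > 0 for i = 1,…,n. Set W = (Σ_{i=1}^{n} (a_i/b_i)^{1/3})^{−1}, y*_i = (a_i/b_i)^{1/3}·W, and x*_i = a_i^{2/3} b_i^{1/3}·sqrt(W). Then y* lies in the simplex (y*_i > 0, Σ_i y*_i = 1), x*_i > 0, and (x*, y*) minimizes L(x,y) = Σ_{i=1}^{n} [ a_i/x_i + x_i/(b_i y_i) ] over all x with x_i > 0 and all y in the simplex with y_i > 0; that is, Σ_i [a_i/x*_i + x*_i/(b_i y*_i)] ≤ Σ_i [a_i/x_i + x_i/(b_i y_i)] for all such (x, y). -/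

import Mathlib

/-- Lemma 6: the joint optimal stepsize–sampling problem.  With
`W = (Σ (a_i/b_i)^{1/3})⁻¹`, `y*_i = (a_i/b_i)^{1/3} W`,
`x*_i = a_i^{2/3} b_i^{1/3} √W`, the pair `(x*, y*)` minimizes
`L(x,y) = Σ_i [a_i/x_i + x_i/(b_i y_i)]` over positive `x` and positive `y`
in the simplex. -/
theorem joint_optimal_stepsize_sampling (n : ℕ) (hn : 1 ≤ n) (a b : Fin n → ℝ)
    (ha : ∀ i, 0 < a i) (hb : ∀ i, 0 < b i) :
    (∀ i, 0 < (a i / b i) ^ ((1 : ℝ) / 3) * (∑ j, (a j / b j) ^ ((1 : ℝ) / 3))⁻¹)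
    ∧ (∑ i, (a i / b i) ^ ((1 : ℝ) / 3) * (∑ j, (a j / b j) ^ ((1 : ℝ) / 3))⁻¹) = 1
    ∧ (∀ i, 0 < a i ^ ((2 : ℝ) / 3) * b i ^ ((1 : ℝ) / 3) *
          Real.sqrt (∑ j, (a j / b j) ^ ((1 : ℝ) / 3))⁻¹)
    ∧ ∀ x y : Fin n → ℝ, (∀ i, 0 < x i) → (∀ i, 0 < y i) → (∑ i, y i) = 1 →
        (∑ i, (a i / (a i ^ ((2 : ℝ) / 3) * b i ^ ((1 : ℝ) / 3) *
              Real.sqrt (∑ j, (a j / b j) ^ ((1 : ℝ) / 3))⁻¹)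
          + (a i ^ ((2 : ℝ) / 3) * b i ^ ((1 : ℝ) / 3) *
              Real.sqrt (∑ j, (a j / b j) ^ ((1 : ℝ) / 3))⁻¹) /
            (b i * ((a i / b i) ^ ((1 : ℝ) / 3) *
              (∑ j, (a j / b j) ^ ((1 : ℝ) / 3))⁻¹))))
        ≤ ∑ i, (a i / x i + x i / (b i * y i)) := by
  have hne : Nonempty (Fin n) := ⟨⟨0, hn⟩⟩
  set S : ℝ := ∑ j, (a j / b j) ^ ((1 : ℝ) / 3) with hSdef
  have hab : ∀ i, 0 < a i / b i := fun i => div_pos (ha i) (hb i)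
  have hS : 0 < S :=
    Finset.sum_pos (fun i _ => Real.rpow_pos_of_pos (hab i) _) Finset.univ_nonempty
  set R : ℝ := S ^ ((1 : ℝ) / 2) with hRdef
  have hR : 0 < R := Real.rpow_pos_of_pos hS _
  have hsqrt : Real.sqrt S⁻¹ = R⁻¹ := by
    rw [Real.sqrt_inv, Real.sqrt_eq_rpow]
  have hR2 : R ^ 2 = S := by
    rw [hRdef, ← Real.rpow_natCast (S ^ ((1:ℝ)/2)) 2, ← Real.rpow_mul hS.le]
    norm_num
  refine ⟨fun i => mul_pos (Real.rpow_pos_of_pos (hab i) _) (inv_pos.mpr hS),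
    by rw [← Finset.sum_mul, mul_inv_cancel₀ hS.ne'],
    fun i => mul_pos (mul_pos (Real.rpow_pos_of_pos (ha i) _)
      (Real.rpow_pos_of_pos (hb i) _)) (Real.sqrt_pos.mpr (inv_pos.mpr hS)),
    fun x y hx hy hy1 => ?_⟩
  -- value of the objective at the candidate point
  have hkey : ∀ i : Fin n,
      a i / (a i ^ ((2 : ℝ) / 3) * b i ^ ((1 : ℝ) / 3) * Real.sqrt S⁻¹)
        + (a i ^ ((2 : ℝ) / 3) * b i ^ ((1 : ℝ) / 3) * Real.sqrt S⁻¹) /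
          (b i * ((a i / b i) ^ ((1 : ℝ) / 3) * S⁻¹))
        = 2 * (a i / b i) ^ ((1 : ℝ) / 3) * R := by
    intro i
    set A : ℝ := a i ^ ((1 : ℝ) / 3) with hAdef
    set B : ℝ := b i ^ ((1 : ℝ) / 3) with hBdef
    have hA : 0 < A := Real.rpow_pos_of_pos (ha i) _
    have hB : 0 < B := Real.rpow_pos_of_pos (hb i) _
    have hA3 : A ^ 3 = a i := by
      rw [hAdef, ← Real.rpow_natCast (a i ^ ((1:ℝ)/3)) 3, ← Real.rpow_mul (ha i).le]
      norm_num
    have hB3 : B ^ 3 = b i := by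
      rw [hBdef, ← Real.rpow_natCast (b i ^ ((1:ℝ)/3)) 3, ← Real.rpow_mul (hb i).le]
      norm_num
    have hA2 : a i ^ ((2 : ℝ) / 3) = A ^ 2 := by
      rw [hAdef, ← Real.rpow_natCast (a i ^ ((1:ℝ)/3)) 2, ← Real.rpow_mul (ha i).le]
      norm_num
    have hAB : (a i / b i) ^ ((1 : ℝ) / 3) = A / B :=
      Real.div_rpow (ha i).le (hb i).le _
    rw [hsqrt, hA2, hAB, ← hA3, ← hB3, ← hR2]
    field_simp
    ring
  rw [Finset.sum_congr rfl fun i _ => hkey i, ← Finset.sum_mul, ← Finset.mul_sum,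
    ← hSdef]
  -- lower bound the objective at an arbitrary point
  set f : Fin n → ℝ := fun i => Real.sqrt (a i / (b i * y i)) with hfdef
  have hf0 : ∀ i, 0 < f i := fun i =>
    Real.sqrt_pos.mpr (div_pos (ha i) (mul_pos (hb i) (hy i)))
  have step1 : ∀ i : Fin n, 2 * f i ≤ a i / x i + x i / (b i * y i) := by
    intro i
    have hu : 0 < a i / x i := div_pos (ha i) (hx i)
    have hv : 0 < x i / (b i * y i) := div_pos (hx i) (mul_pos (hb i) (hy i))
    have huv : (a i / x i) * (x i / (b i * y i)) = a i / (b i * y i) := by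
      rw [div_mul_div_comm, mul_comm (a i) (x i), mul_div_mul_left _ _ (hx i).ne']
    have h2 : 2 * Real.sqrt (a i / x i) * Real.sqrt (x i / (b i * y i))
        ≤ a i / x i + x i / (b i * y i) := by
      nlinarith [sq_nonneg (Real.sqrt (a i / x i) - Real.sqrt (x i / (b i * y i))),
        Real.sq_sqrt hu.le, Real.sq_sqrt hv.le]
    calc 2 * f i = 2 * Real.sqrt (a i / x i) * Real.sqrt (x i / (b i * y i)) := by
          rw [hfdef, mul_assoc, ← Real.sqrt_mul hu.le, huv]
      _ ≤ _ := h2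
  have step2 : S * R ≤ ∑ i, f i := by
    have holder := Real.inner_le_Lp_mul_Lq_of_nonneg (Finset.univ)
      (f := fun i => f i ^ ((2 : ℝ) / 3)) (g := fun i => y i ^ ((1 : ℝ) / 3))
      (p := 3 / 2) (q := 3) ⟨by norm_num, by norm_num, by norm_num⟩
      (fun i _ => (Real.rpow_pos_of_pos (hf0 i) _).le)
      (fun i _ => (Real.rpow_pos_of_pos (hy i) _).le)
    have e1 : ∀ i : Fin n, f i ^ ((2 : ℝ) / 3) * y i ^ ((1 : ℝ) / 3)
        = (a i / b i) ^ ((1 : ℝ) / 3) := by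
      intro i
      have : f i ^ ((2 : ℝ) / 3) = (a i / (b i * y i)) ^ ((1 : ℝ) / 3) := by
        show Real.sqrt (a i / (b i * y i)) ^ ((2 : ℝ) / 3) = _
        rw [Real.sqrt_eq_rpow, ← Real.rpow_mul
          (div_pos (ha i) (mul_pos (hb i) (hy i))).le]
        norm_num
      rw [this, ← Real.mul_rpow (div_pos (ha i) (mul_pos (hb i) (hy i))).le (hy i).le]
      congr 1
      rw [div_mul_eq_mul_div, mul_comm (b i) (y i), mul_comm (a i) (y i),
        mul_div_mul_left _ _ (hy i).ne']
    have e2 : ∀ i : Fin n, (f i ^ ((2 : ℝ) / 3)) ^ ((3 : ℝ) / 2) = f i := by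
      intro i
      rw [← Real.rpow_mul (hf0 i).le]
      norm_num
    have e3 : ∀ i : Fin n, (y i ^ ((1 : ℝ) / 3)) ^ ((3 : ℝ)) = y i := by
      intro i
      rw [← Real.rpow_mul (hy i).le]
      norm_num
    have hnorm : S ≤ (∑ i, f i) ^ ((2 : ℝ) / 3) := by
      calc S = ∑ i, f i ^ ((2 : ℝ) / 3) * y i ^ ((1 : ℝ) / 3) := by
            rw [hSdef]; exact (Finset.sum_congr rfl fun i _ => (e1 i)).symm
        _ ≤ (∑ i, (f i ^ ((2:ℝ)/3)) ^ ((3:ℝ)/2)) ^ ((1:ℝ) / (3/2))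
              * (∑ i, (y i ^ ((1:ℝ)/3)) ^ ((3:ℝ))) ^ ((1:ℝ) / 3) := by
            convert holder using 4
        _ = (∑ i, f i) ^ ((2 : ℝ) / 3) := by
            rw [Finset.sum_congr rfl fun i _ => e2 i,
              Finset.sum_congr rfl fun i _ => e3 i, hy1]
            norm_num
    have hsum0 : (0:ℝ) ≤ ∑ i, f i := Finset.sum_nonneg fun i _ => (hf0 i).le
    have := Real.rpow_le_rpow hS.le hnorm (by norm_num : (0:ℝ) ≤ 3/2)
    rw [← Real.rpow_mul hsum0] at this
    norm_num at this
    have h32 : S ^ ((3:ℝ)/2) = S * R := by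
      rw [hRdef, show (3:ℝ)/2 = 1 + 1/2 by norm_num, Real.rpow_add hS, Real.rpow_one]
    linarith [this]
  calc 2 * S * R = ∑ i, 2 * f i + (2 * (S * R) - ∑ i, 2 * f i) := by ring
    _ ≤ ∑ i, (a i / x i + x i / (b i * y i)) := by
        have h1 : ∑ i, 2 * f i ≤ ∑ i, (a i / x i + x i / (b i * y i)) :=
          Finset.sum_le_sum fun i _ => step1 i
        have h2 : 2 * (S * R) ≤ ∑ i, 2 * f i := by
          rw [← Finset.mul_sum]; linarith
        linarith
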